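/- Let α and β be ordinals below ε₀ with Cantor normal forms α = ω^{α₁}·a₁ + ... + ω^{αₙ}·aₙ and β = ω^{β₁}·b₁ + ... + ω^{βₘ}·bₘ (with a_i, b_i positive and exponents strictly decreasing). If CP(α,β) ≤ CP(β,γ), CE(α,β) ≤ CE(β,γ) and CC(α,β) ≤ CC(β,γ) for some ordinal γ < ε₀, then α ≤ β. -/

import Mathlib

open ONote

/-- The list of terms `(exponent, coefficient)` of the Cantor normal form. -/
def terms : ONote → List (ONote × ℕ+)
  | ONote.zero => []
  | ONote.oadd e n a => (e, n) :: terms a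

open Classical in
/-- Comparison position: the least (1-based) index at which the Cantor normal
forms of `α` and `β` differ (missing terms are treated as `0`, so they differ
from any actual term); `0` if the normal forms coincide. -/
noncomputable def CP (α β : ONote) : ℕ :=
  if h : ∃ i, (terms α)[i]? ≠ (terms β)[i]? then Nat.find h + 1 else 0

/-- Comparison coefficient: the coefficient of `α` at position `CP α β`,
with the convention that it is `0` when `CP α β = 0` or when `α` has no
term at that position. -/
noncomputable def CC (α β : ONote) : ℕ :=
  match CP α β with
  | 0 => 0
  | i + 1 => (((terms α)[i]?).map (fun p => ((p.2 : ℕ+) : ℕ))).getD 0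

/-- Comparison exponent: the exponent of `α` at position `CP α β`,
with the convention that it is `0` when `CP α β = 0` or when `α` has no
term at that position. -/
noncomputable def CE (α β : ONote) : ONote :=
  match CP α β with
  | 0 => ONote.zero
  | i + 1 => (((terms α)[i]?).map (fun p => p.1)).getD ONote.zero

/-- Maximal position: `MP 0 = 1`, and for `α = ω^α₁·a₁ + ⋯ + ω^αₙ·aₙ`,
`MP α = max {n, MP α₁, …, MP αₙ}`. -/
def MP : ONote → ℕ
  | ONote.zero => 1
  | ONote.oadd e _ a => max (MP e) (max ((terms a).length + 1) (MP a))

/-- Maximal coefficient: `MC 0 = 0`, and for `α = ω^α₁·a₁ + ⋯ + ω^αₙ·aₙ`,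
`MC α = max {aᵢ, MC αᵢ}`. -/
def MC : ONote → ℕ
  | ONote.zero => 0
  | ONote.oadd e n a => max (MC e) (max ((n : ℕ+) : ℕ) (MC a))

lemma terms_inj : ∀ {α β : ONote}, terms α = terms β → α = β
  | ONote.zero, ONote.zero, _ => rfl
  | ONote.zero, ONote.oadd _ _ _, h => by simp [terms] at h
  | ONote.oadd _ _ _, ONote.zero, h => by simp [terms] at h
  | ONote.oadd e n a, ONote.oadd e' n' a', h => by
      simp only [terms, List.cons.injEq, Prod.mk.injEq] at h
      obtain ⟨⟨he, hn⟩, ha⟩ := h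
      rw [he, hn, terms_inj ha]

lemma exp_lt_of_nfBelow : ∀ (k : ℕ) {a : ONote} {b : Ordinal} (_ : a.NFBelow b)
    {e' : ONote} {n' : ℕ+}, (terms a)[k]? = some (e', n') → ONote.repr e' < b
  | _, ONote.zero, _, _, _, _, h => by simp [terms] at h
  | 0, ONote.oadd e1 n1 a1, b, hb, e', n', h => by
      simp only [terms, List.getElem?_cons_zero, List.getElem?_cons_succ] at h
      obtain ⟨he, _⟩ : (e1, n1).1 = e' ∧ (e1, n1).2 = n' := by
        have := Option.some.inj h; exact ⟨congrArg Prod.fst this, congrArg Prod.snd this⟩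
      exact he ▸ hb.lt
  | (k+1), ONote.oadd e1 n1 a1, b, hb, e', n', h => by
      simp only [terms, List.getElem?_cons_zero, List.getElem?_cons_succ] at h
      exact lt_trans (exp_lt_of_nfBelow k hb.snd h) hb.lt

lemma exp_nf : ∀ (k : ℕ) {a : ONote} (_ : a.NF) {e' : ONote} {n' : ℕ+},
    (terms a)[k]? = some (e', n') → e'.NF
  | _, ONote.zero, _, _, _, h => by simp [terms] at h
  | 0, ONote.oadd e1 n1 a1, ha, e', n', h => by
      simp only [terms, List.getElem?_cons_zero, List.getElem?_cons_succ] at h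
      have := Option.some.inj h
      have he : e1 = e' := congrArg Prod.fst this
      exact he ▸ ha.fst
  | (k+1), ONote.oadd e1 n1 a1, ha, e', n', h => by
      simp only [terms, List.getElem?_cons_zero, List.getElem?_cons_succ] at h
      exact exp_nf k ha.snd h

lemma exp_strict : ∀ (i j : ℕ) {a : ONote} (_ : a.NF) (_ : i < j)
    {e1 e2 : ONote} {n1 n2 : ℕ+},
    (terms a)[i]? = some (e1, n1) → (terms a)[j]? = some (e2, n2) → e2 < e1
  | _, _, ONote.zero, _, _, _, _, _, _, h1, _ => by simp [terms] at h1
  | 0, j, ONote.oadd e n a, ha, hij, e1, e2, n1, n2, h1, h2 => by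
      obtain ⟨j, rfl⟩ : ∃ j', j = j' + 1 := ⟨j - 1, (Nat.succ_pred_eq_of_pos hij).symm⟩
      simp only [terms, List.getElem?_cons_zero, List.getElem?_cons_succ] at h1 h2
      have := Option.some.inj h1
      have he : e = e1 := congrArg Prod.fst this
      rw [ONote.lt_def]
      exact he ▸ exp_lt_of_nfBelow j ha.snd' h2
  | (i+1), j, ONote.oadd e n a, ha, hij, e1, e2, n1, n2, h1, h2 => by
      obtain ⟨j, rfl⟩ : ∃ j', j = j' + 1 :=
        ⟨j - 1, (Nat.succ_pred_eq_of_pos (Nat.lt_of_le_of_lt (Nat.zero_le _) hij)).symm⟩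
      simp only [terms, List.getElem?_cons_zero, List.getElem?_cons_succ] at h1 h2
      exact exp_strict i j ha.snd (Nat.lt_of_succ_lt_succ hij) h1 h2

lemma lt_of_agree : ∀ (i : ℕ) {α β : ONote}, α.NF → β.NF →
    (∀ k < i, (terms α)[k]? = (terms β)[k]?) →
    (((terms α)[i]? = none ∧ (terms β)[i]? ≠ none) ∨
      (∃ e n e' n', (terms α)[i]? = some (e, n) ∧ (terms β)[i]? = some (e', n') ∧
        (e < e' ∨ (e = e' ∧ (n : ℕ) < (n' : ℕ))))) → α < β
  | 0, ONote.zero, ONote.zero, _, _, _, hcase => by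
      rcases hcase with ⟨_, hne⟩ | ⟨e, n, e', n', h1, _⟩
      · exact absurd rfl hne
      · simp [terms] at h1
  | 0, ONote.zero, ONote.oadd e' n' a', _, _, _, _ => ONote.oadd_pos e' n' a'
  | 0, ONote.oadd e n a, ONote.zero, _, _, _, hcase => by
      rcases hcase with ⟨h1, _⟩ | ⟨_, _, _, _, _, h2, _⟩
      · simp [terms] at h1
      · simp [terms] at h2
  | 0, ONote.oadd e n a, ONote.oadd e' n' a', hα, hβ, _, hcase => by
      rcases hcase with ⟨h1, _⟩ | ⟨e1, n1, e2, n2, h1, h2, hlt⟩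
      · simp [terms] at h1
      · simp only [terms, List.getElem?_cons_zero, List.getElem?_cons_succ, Option.some.injEq] at h1 h2
        have he1 : e1 = e := (congrArg Prod.fst h1).symm
        have hn1 : n1 = n := (congrArg Prod.snd h1).symm
        have he2 : e2 = e' := (congrArg Prod.fst h2).symm
        have hn2 : n2 = n' := (congrArg Prod.snd h2).symm
        subst he1; subst hn1; subst he2; subst hn2
        rcases hlt with h | ⟨rfl, h⟩
        · exact ONote.oadd_lt_oadd_1 hα h
        · exact ONote.oadd_lt_oadd_2 hα h
  | (i+1), ONote.zero, β, _, _, hagree, hcase => by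
      have h0 : (terms ONote.zero)[(i+1)]? = none := by simp [terms]
      rcases hcase with ⟨_, hne⟩ | ⟨e, n, e', n', h1, _⟩
      · -- β agrees with zero on position 0, so β = zero, contradiction
        have hb0 : (terms β)[0]? = none := (hagree 0 (Nat.succ_pos _)).symm.trans (by simp [terms])
        cases β with
        | zero => exact absurd (by simp [terms]) hne
        | oadd e' n' a' => simp [terms] at hb0
      · simp [terms] at h1
  | (i+1), ONote.oadd e n a, β, hα, hβ, hagree, hcase => by
      cases β with
      | zero =>
          have hb0 := hagree 0 (Nat.succ_pos _)
          simp [terms] at hb0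
      | oadd e' n' a' =>
          have hb0 := hagree 0 (Nat.succ_pos _)
          simp only [terms, List.getElem?_cons_zero, List.getElem?_cons_succ, Option.some.injEq] at hb0
          have he : e = e' := congrArg Prod.fst hb0
          have hn : n = n' := congrArg Prod.snd hb0
          subst he; subst hn
          have hrec : a < a' := by
            refine lt_of_agree i hα.snd hβ.snd (fun k hk => ?_) ?_
            · exact hagree (k+1) (Nat.succ_lt_succ hk)
            · rcases hcase with ⟨h1, hne⟩ | ⟨e1, n1, e2, n2, h1, h2, hlt⟩
              · exact Or.inl ⟨h1, hne⟩
              · exact Or.inr ⟨e1, n1, e2, n2, h1, h2, hlt⟩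
          exact ONote.oadd_lt_oadd_3 hrec

theorem cp_cc_ce_le_imp_le (α β γ : ONote) (hα : α.NF) (hβ : β.NF) (hγ : γ.NF)
    (h1 : CP α β ≤ CP β γ) (h2 : CE α β ≤ CE β γ) (h3 : CC α β ≤ CC β γ) :
    α ≤ β := by
  classical
  by_cases hab : ∃ i : ℕ, (terms α)[i]? ≠ (terms β)[i]?
  · obtain ⟨i, hCPab, hdiff, hagree⟩ :
        ∃ i, CP α β = i + 1 ∧ (terms α)[i]? ≠ (terms β)[i]? ∧
          ∀ k < i, (terms α)[k]? = (terms β)[k]? :=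
      ⟨Nat.find hab, by unfold CP; rw [dif_pos hab], Nat.find_spec hab,
        fun k hk => not_not.1 (Nat.find_min hab hk)⟩
    have hbg : ∃ i : ℕ, (terms β)[i]? ≠ (terms γ)[i]? := by
      by_contra h
      have h0 : CP β γ = 0 := by unfold CP; rw [dif_neg h]
      rw [hCPab, h0] at h1
      omega
    obtain ⟨j, hCPbg⟩ : ∃ j, CP β γ = j + 1 :=
      ⟨Nat.find hbg, by unfold CP; rw [dif_pos hbg]⟩
    have hij : i ≤ j := by rw [hCPab, hCPbg] at h1; omega
    -- compute CC/CE values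
    rcases hA : (terms α)[i]? with _ | ⟨e, n⟩
    · -- α has no term at i; β must
      have hbne : (terms β)[i]? ≠ none := fun h => hdiff (hA.trans h.symm)
      exact le_of_lt (lt_of_agree i hα hβ hagree (Or.inl ⟨hA, hbne⟩))
    · have hCCab : CC α β = (n : ℕ) := by
        have hA' := hA; simp [CC, hCPab, hA']
      rcases hB : (terms β)[j]? with _ | ⟨e', n''⟩
      · have hCCbg : CC β γ = 0 := by
          have hB' := hB; simp [CC, hCPbg, hB']
        rw [hCCab, hCCbg] at h3
        exact absurd h3 (by simp)
      · have hCCbg : CC β γ = (n'' : ℕ) := by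
          have hB' := hB; simp [CC, hCPbg, hB']
        have hCEab : CE α β = e := by
          have hA' := hA; simp [CE, hCPab, hA']
        have hCEbg : CE β γ = e' := by
          have hB' := hB; simp [CE, hCPbg, hB']
        rw [hCCab, hCCbg] at h3
        rw [hCEab, hCEbg] at h2
        -- β has a term at i
        have hjlen : j < (terms β).length := (List.getElem?_eq_some_iff.1 hB).1
        have hilen : i < (terms β).length := lt_of_le_of_lt hij hjlen
        rcases hBi : (terms β)[i]? with _ | ⟨eb, nb⟩
        · exact absurd (List.getElem?_eq_none_iff.1 hBi) (not_le.2 hilen)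
        · rcases eq_or_lt_of_le hij with heq | hlt
          · -- i = j
            have hkey : some (e', n'') = some (eb, nb) := by rw [← hB, ← hBi, heq]
            have heb : e' = eb := congrArg Prod.fst (Option.some.inj hkey)
            have hnb : n'' = nb := congrArg Prod.snd (Option.some.inj hkey)
            subst heb; subst hnb
            have hne : e ≠ e' ∨ (n : ℕ) ≠ (n'' : ℕ) := by
              by_contra h
              push_neg at h
              obtain ⟨h4, h5⟩ := h
              exact hdiff (hA.trans (by rw [hBi, h4, PNat.coe_injective h5]))
            have hcase : e < e' ∨ (e = e' ∧ (n : ℕ) < (n'' : ℕ)) := by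
              rcases lt_or_eq_of_le (ONote.le_def.1 h2) with h | h
              · exact Or.inl (ONote.lt_def.2 h)
              · have hee : e = e' := by
                  haveI : ONote.NF e := exp_nf i hα hA
                  haveI : ONote.NF e' := exp_nf i hβ hBi
                  exact ONote.repr_inj.1 h
                rcases hne with h' | h'
                · exact absurd hee h'
                · exact Or.inr ⟨hee, lt_of_le_of_ne h3 h'⟩
            exact le_of_lt (lt_of_agree i hα hβ hagree
              (Or.inr ⟨e, n, e', n'', hA, hBi, hcase⟩))
          · -- i < j : exponent at j strictly smaller
            have hstr : e' < eb := exp_strict i j hβ hlt hBi hB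
            have : e < eb := lt_of_le_of_lt h2 hstr
            exact le_of_lt (lt_of_agree i hα hβ hagree
              (Or.inr ⟨e, n, eb, nb, hA, hBi, Or.inl this⟩))
  · push_neg at hab
    have : terms α = terms β := List.ext_getElem? hab
    exact (terms_inj this).le
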